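/- Let ℱ be a finite family of m non-empty finite subsets of a set U and let k ∈ ℕ. Define ℱ' = {F × {i} : F ∈ ℱ, 0 ≤ i ≤ m}, a family of subsets of U × {0,…,m}. Then ℱ has no hitting set of size at most k if and only if ℱ' contains a (k+1)(m+1)-flower, i.e., there exists a set C and a subfamily 𝒢 ⊆ ℱ' that is a (k+1)(m+1)-flower with core C. -/

import Mathlib

/-- A family `𝒢` is an `l`-flower with core `C` if every member strictly contains `C`
and every blocking set for the restriction `{G \ C : G ∈ 𝒢}` has at least `l` elements. -/
def IsFlower {α : Type*} [DecidableEq α] (l : ℕ) (C : Finset α)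
    (𝒢 : Finset (Finset α)) : Prop :=
  (∀ G ∈ 𝒢, C ⊂ G) ∧
  ∀ X : Finset α, (∀ G ∈ 𝒢, ((G \ C) ∩ X).Nonempty) → l ≤ X.card

/-- **Correctness of the coNP-hardness reduction for finding flowers.** Let `ℱ` be a
finite family of `m` non-empty finite subsets of `U` and `k ∈ ℕ`. Let
`ℱ' = {F × {i} : F ∈ ℱ, 0 ≤ i ≤ m}`. Then `ℱ` has no hitting set of size at most `k`
iff `ℱ'` contains a `(k+1)(m+1)`-flower. -/
theorem no_small_hittingSet_iff_flower_in_copies {α : Type*} [DecidableEq α]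
    (ℱ : Finset (Finset α)) (hne : ∀ F ∈ ℱ, F.Nonempty) (k : ℕ) :
    (¬ ∃ S : Finset α, S.card ≤ k ∧ ∀ F ∈ ℱ, (S ∩ F).Nonempty) ↔
    (∃ (C : Finset (α × ℕ)) (𝒢 : Finset (Finset (α × ℕ))),
      𝒢 ⊆ ((ℱ ×ˢ Finset.range (ℱ.card + 1)).image fun p => p.1 ×ˢ ({p.2} : Finset ℕ)) ∧
      IsFlower ((k + 1) * (ℱ.card + 1)) C 𝒢) := by
  constructor
  · intro h
    refine ⟨∅, (ℱ ×ˢ Finset.range (ℱ.card + 1)).image fun p => p.1 ×ˢ ({p.2} : Finset ℕ),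
      subset_rfl, ?_, ?_⟩
    · intro G hG
      obtain ⟨p, hp, rfl⟩ := Finset.mem_image.mp hG
      rw [Finset.mem_product] at hp
      exact Finset.empty_ssubset.mpr
        (Finset.nonempty_product.mpr ⟨hne _ hp.1, Finset.singleton_nonempty _⟩)
    · intro X hX
      have key : ∀ i ∈ Finset.range (ℱ.card + 1),
          k + 1 ≤ (X.filter (fun p => p.2 = i)).card := by
        intro i hi
        by_contra hlt
        push_neg at hlt
        apply h
        refine ⟨(X.filter (fun p => p.2 = i)).image Prod.fst,
          le_trans Finset.card_image_le (Nat.lt_succ_iff.mp hlt), ?_⟩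
        intro F hF
        obtain ⟨q, hq⟩ := hX (F ×ˢ ({i} : Finset ℕ))
          (Finset.mem_image.mpr ⟨(F, i), Finset.mem_product.mpr ⟨hF, hi⟩, rfl⟩)
        rw [Finset.sdiff_empty, Finset.mem_inter, Finset.mem_product,
          Finset.mem_singleton] at hq
        refine ⟨q.1, Finset.mem_inter.mpr ⟨Finset.mem_image.mpr
          ⟨q, Finset.mem_filter.mpr ⟨hq.2, hq.1.2⟩, rfl⟩, hq.1.1⟩⟩
      calc (k + 1) * (ℱ.card + 1)
          = ∑ i ∈ Finset.range (ℱ.card + 1), (k + 1) := by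
            simp [Finset.sum_const, Nat.mul_comm]
        _ ≤ ∑ i ∈ Finset.range (ℱ.card + 1), (X.filter (fun p => p.2 = i)).card :=
            Finset.sum_le_sum key
        _ = ((Finset.range (ℱ.card + 1)).biUnion
              (fun i => X.filter (fun p => p.2 = i))).card := by
            rw [Finset.card_biUnion]
            intro i _ j _ hij
            simp only [Finset.disjoint_left, Finset.mem_filter]
            rintro a ⟨_, rfl⟩ ⟨_, h2⟩
            exact hij h2
        _ ≤ X.card := Finset.card_le_card (by
            intro a ha
            simp only [Finset.mem_biUnion, Finset.mem_filter] at ha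
            obtain ⟨i, _, ha, _⟩ := ha
            exact ha)
  · rintro ⟨C, 𝒢, hsub, hcore, hblock⟩ ⟨S, hScard, hSh⟩
    have hmem : ∀ G ∈ 𝒢, ∃ F, F ∈ ℱ ∧ ∃ i, i ∈ Finset.range (ℱ.card + 1) ∧
        G = F ×ˢ ({i} : Finset ℕ) := by
      intro G hG
      obtain ⟨p, hp, hpG⟩ := Finset.mem_image.mp (hsub hG)
      rw [Finset.mem_product] at hp
      exact ⟨p.1, hp.1, p.2, hp.2, hpG.symm⟩
    have hGC : ∀ G ∈ 𝒢, (G \ C).Nonempty := fun G hG =>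
      Finset.sdiff_nonempty.mpr (hcore G hG).not_subset
    by_cases h2 : ∀ G₁ ∈ 𝒢, ∀ G₂ ∈ 𝒢, ∀ p₁ ∈ G₁, ∀ p₂ ∈ G₂, p₁.2 = p₂.2
    · -- all members live on the same level; a transversal of size ≤ |ℱ| blocks
      set X : Finset (α × ℕ) := 𝒢.attach.image (fun G => (hGC G.1 G.2).choose) with hXdef
      have hXb : ∀ G ∈ 𝒢, ((G \ C) ∩ X).Nonempty := by
        intro G hG
        refine ⟨(hGC G hG).choose, Finset.mem_inter.mpr ⟨(hGC G hG).choose_spec, ?_⟩⟩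
        exact Finset.mem_image.mpr ⟨⟨G, hG⟩, Finset.mem_attach _ _, rfl⟩
      have hcard : X.card ≤ 𝒢.card :=
        le_trans Finset.card_image_le (le_of_eq (Finset.card_attach))
      have hGF : 𝒢.card ≤ ℱ.card := by
        apply Finset.card_le_card_of_injOn (fun G => G.image Prod.fst)
        · intro G hG
          obtain ⟨F, hF, i, _, rfl⟩ := hmem G hG
          have : (F ×ˢ ({i} : Finset ℕ)).image Prod.fst = F := by
            ext a
            simp [Finset.mem_image, Finset.mem_product]
          simpa only [Finset.mem_coe, this] using hF
        · intro G₁ hG₁ G₂ hG₂ heq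
          obtain ⟨F₁, hF₁, i₁, _, rfl⟩ := hmem G₁ hG₁
          obtain ⟨F₂, hF₂, i₂, _, rfl⟩ := hmem G₂ hG₂
          have hIm : ∀ (F : Finset α) (i : ℕ), (F ×ˢ ({i} : Finset ℕ)).image Prod.fst = F := by
            intro F i; ext a; simp [Finset.mem_image, Finset.mem_product]
          have hFeq : F₁ = F₂ := by
            have := heq
            simp only [hIm] at this
            exact this
          obtain ⟨a₁, ha₁⟩ := hne F₁ hF₁
          have hp₁ : (a₁, i₁) ∈ F₁ ×ˢ ({i₁} : Finset ℕ) := by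
            simp [Finset.mem_product, ha₁]
          have hp₂ : (a₁, i₂) ∈ F₂ ×ˢ ({i₂} : Finset ℕ) := by
            simp [Finset.mem_product, hFeq ▸ ha₁]
          have : i₁ = i₂ := h2 _ hG₁ _ hG₂ _ hp₁ _ hp₂
          rw [hFeq, this]
      have hb := hblock X hXb
      have h1 : ℱ.card + 1 ≤ (k + 1) * (ℱ.card + 1) :=
        Nat.le_mul_of_pos_left _ (Nat.succ_pos k)
      omega
    · push_neg at h2
      obtain ⟨G₁, hG₁, G₂, hG₂, p₁, hp₁, p₂, hp₂, hne2⟩ := h2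
      obtain ⟨F₁, hF₁, i₁, _, rfl⟩ := hmem G₁ hG₁
      obtain ⟨F₂, hF₂, i₂, _, rfl⟩ := hmem G₂ hG₂
      have hC0 : C = ∅ := by
        rw [Finset.eq_empty_iff_forall_notMem]
        intro q hq
        have hq₁ := (hcore _ hG₁).subset hq
        have hq₂ := (hcore _ hG₂).subset hq
        rw [Finset.mem_product, Finset.mem_singleton] at hq₁ hq₂ hp₁ hp₂
        exact hne2 (by rw [hp₁.2, hp₂.2, ← hq₁.2, ← hq₂.2])
      have hXb : ∀ G ∈ 𝒢, ((G \ C) ∩ (S ×ˢ Finset.range (ℱ.card + 1))).Nonempty := by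
        intro G hG
        obtain ⟨F, hF, i, hi, rfl⟩ := hmem G hG
        obtain ⟨a, ha⟩ := hSh F hF
        rw [Finset.mem_inter] at ha
        refine ⟨(a, i), Finset.mem_inter.mpr ⟨?_, ?_⟩⟩
        · rw [hC0, Finset.sdiff_empty, Finset.mem_product, Finset.mem_singleton]
          exact ⟨ha.2, rfl⟩
        · rw [Finset.mem_product]
          exact ⟨ha.1, hi⟩
      have hb := hblock _ hXb
      rw [Finset.card_product, Finset.card_range] at hb
      have : S.card * (ℱ.card + 1) ≤ k * (ℱ.card + 1) :=
        Nat.mul_le_mul_right _ hScard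
      nlinarith
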